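/- In the free R-semimodule V over a set E, and for a finite subset I = {e₁,...,eₙ} ⊆ E with the operation q_I(v, w¹,...,wⁿ) = Σᵢ v_{eᵢ} wⁱ, a vector a = Σ_{d∈E} a_d d is I-central (i.e., satisfies the n-central element axioms B1–B3 for q_I with constants e₁,...,eₙ) if and only if: (i) a_d = 0 for d ∉ I; (ii) a_{e₁} + ... + a_{eₙ} = 1; (iii) each a_{eᵢ} commutes with every element of R; (iv) a_{eᵢ} a_{eⱼ} = 0 for i ≠ j and a_{eᵢ} a_{eᵢ} = a_{eᵢ}. -/

import Mathlib

open Finset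

/-- The generalised if-then-else on the free `R`-semimodule `E →₀ R`, relative to the
finite subset `I = {e 0, …, e (n-1)} ⊆ E`:
`q_I(v, w¹, …, wⁿ) = ∑ᵢ v_{eᵢ} • wⁱ`. -/
noncomputable def qop {R E : Type} [Semiring R] {n : ℕ} (e : Fin n → E)
    (v : E →₀ R) (w : Fin n → (E →₀ R)) : E →₀ R :=
  ∑ i : Fin n, v (e i) • w i

/-- `a` is `I`-central in the free `R`-semimodule over `E`: it satisfies the
central-element axioms (B1)-(B3) for the operation `q_I` with constants
`e₁, …, eₙ` (the basis vectors), where (B3) is required for the module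
operations (addition and scalar multiplication) and for every operation `q_J`
(`J` a finite subset of `E`, given by an injective tuple `d`). -/
noncomputable def ICentral {R E : Type} [Semiring R] {n : ℕ} (e : Fin n → E)
    (a : E →₀ R) : Prop :=
  -- B1
  qop e a (fun i => Finsupp.single (e i) 1) = a ∧
  -- B2
  (∀ x : E →₀ R, qop e a (fun _ => x) = x) ∧
  -- B3 for addition
  (∀ w u : Fin n → E →₀ R, qop e a (fun i => w i + u i) = qop e a w + qop e a u) ∧
  -- B3 for scalar multiplication
  (∀ (r : R) (w : Fin n → E →₀ R), qop e a (fun i => r • w i) = r • qop e a w) ∧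
  -- B3 for every operation q_J
  (∀ (k : ℕ) (d : Fin k → E), Function.Injective d →
    ∀ (c : Fin n → E →₀ R) (Y : Fin n → Fin k → E →₀ R),
      qop e a (fun i => qop d (c i) (Y i)) =
        qop d (qop e a c) (fun j => qop e a (fun i => Y i j)))

/-- A vector `a = ∑_{d ∈ E} a_d d` of the free `R`-semimodule on `E` is `I`-central
(for a nonempty finite subset `I = {e₁,…,eₙ} ⊆ E`) iff:
(i) `a_d = 0` for `d ∉ I`; (ii) `a_{e₁} + ⋯ + a_{eₙ} = 1`;
(iii) each `a_{eᵢ}` commutes with every element of `R`;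
(iv) the `a_{eᵢ}` are orthogonal idempotents. -/
lemma qop_apply {R E : Type} [Semiring R] {n : ℕ} (e : Fin n → E)
    (v : E →₀ R) (w : Fin n → (E →₀ R)) (d : E) :
    qop e v w d = ∑ i : Fin n, v (e i) * w i d := by
  simp [qop, Finsupp.finset_sum_apply]

lemma sum_single_coeff {R E : Type} [Semiring R] {n : ℕ} (e : Fin n → E)
    (he : Function.Injective e) (a : E →₀ R) (j : Fin n) :
    (∑ i : Fin n, a (e i) * (Finsupp.single (e i) (1:R)) (e j)) = a (e j) := by
  rw [Finset.sum_eq_single j]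
  · rw [Finsupp.single_eq_same, mul_one]
  · intro b _ hb
    rw [Finsupp.single_eq_of_ne' (fun h => hb (he h)), mul_zero]
  · intro h; exact absurd (Finset.mem_univ j) h

theorem iCentral_iff {R E : Type} [Semiring R] {n : ℕ} (hn : 0 < n)
    (e : Fin n → E) (he : Function.Injective e) (a : E →₀ R) :
    ICentral e a ↔
      ((∀ d : E, d ∉ Set.range e → a d = 0) ∧
       (∑ i : Fin n, a (e i)) = 1 ∧
       (∀ (i : Fin n) (r : R), a (e i) * r = r * a (e i)) ∧
       (∀ i j : Fin n, i ≠ j → a (e i) * a (e j) = 0) ∧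
       (∀ i : Fin n, a (e i) * a (e i) = a (e i))) := by
  set i0 : Fin n := ⟨0, hn⟩
  constructor
  · rintro ⟨h1, h2, _h3, h4, h5⟩
    -- orthogonal idempotents
    have key : ∀ i j : Fin n, a (e j) * a (e i) = if i = j then a (e i) else 0 := by
      intro i j
      have h := h5 n e he (fun i' => Finsupp.single (e i') 1)
          (fun i' j' => if i' = i ∧ j' = j then Finsupp.single (e i0) 1 else 0)
      have hc := DFunLike.congr_fun h (e i0)
      simp only [qop_apply] at hc
      simp [apply_ite (fun g : E →₀ R => g (e i0)), Finsupp.single_eq_same,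
        mul_ite, ite_mul, mul_zero, zero_mul, mul_one, one_mul, ite_and,
        Finset.sum_ite_eq, Finset.sum_ite_eq'] at hc
      rw [sum_single_coeff e he a j] at hc
      by_cases hij : i = j
      · subst hij
        rw [Finsupp.single_eq_same, mul_one] at hc
        rw [if_pos rfl]
        exact hc.symm
      · rw [Finsupp.single_eq_of_ne' (fun h => hij (he h)), mul_zero] at hc
        rw [if_neg hij]
        exact hc.symm
    refine ⟨?_, ?_, ?_, ?_, ?_⟩
    · -- (i)
      intro d hd
      have hc := DFunLike.congr_fun h1 d
      rw [qop_apply] at hc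
      rw [← hc]
      refine Finset.sum_eq_zero fun i _ => ?_
      rw [Finsupp.single_eq_of_ne' (fun h => hd ⟨i, h⟩), mul_zero]
    · -- (ii)
      have hc := DFunLike.congr_fun (h2 (Finsupp.single (e i0) 1)) (e i0)
      rw [qop_apply] at hc
      simpa [Finsupp.single_eq_same] using hc
    · -- (iii)
      intro i r
      have h := h4 r (fun j => if j = i then Finsupp.single (e i0) 1 else 0)
      have hc := DFunLike.congr_fun h (e i0)
      rw [qop_apply, Finsupp.smul_apply, qop_apply] at hc
      simp only [apply_ite (fun g : E →₀ R => g (e i0)), Finsupp.smul_apply,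
        Finsupp.single_eq_same, Finsupp.coe_zero, Pi.zero_apply, smul_zero, smul_ite,
        smul_eq_mul, mul_one, mul_ite, mul_zero, Finset.sum_ite_eq', Finset.mem_univ,
        if_true] at hc
      exact hc
    · -- (iv)
      intro i j hij
      have := key j i
      rwa [if_neg (fun h => hij h.symm)] at this
    · -- (v)
      intro i
      have := key i i
      rwa [if_pos rfl] at this
  · rintro ⟨hz, hsum, hcomm, horth, hid⟩
    have hlc : ∀ (i : Fin n) (u v : R), u * (a (e i) * v) = a (e i) * (u * v) := by
      intro i u v; rw [← mul_assoc, ← hcomm i u, mul_assoc]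
    have hre : ∀ (i i' : Fin n) (u v : R),
        (a (e i') * u) * (a (e i) * v) = (a (e i') * a (e i)) * (u * v) := by
      intro i i' u v; rw [mul_assoc, hlc i u v, ← mul_assoc]
    refine ⟨?_, ?_, ?_, ?_, ?_⟩
    · -- B1
      ext x
      rw [qop_apply]
      by_cases hx : x ∈ Set.range e
      · obtain ⟨j, rfl⟩ := hx
        exact sum_single_coeff e he a j
      · rw [hz x hx]
        refine Finset.sum_eq_zero fun i _ => ?_
        rw [Finsupp.single_eq_of_ne' (fun h => hx ⟨i, h⟩), mul_zero]
    · -- B2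
      intro x
      rw [qop, ← Finset.sum_smul, hsum, one_smul]
    · -- B3 add
      intro w u
      simp [qop, smul_add, Finset.sum_add_distrib]
    · -- B3 smul
      intro r w
      rw [qop, qop, Finset.smul_sum]
      refine Finset.sum_congr rfl fun i _ => ?_
      rw [smul_smul, hcomm i r, ← smul_smul]
    · -- B3 for q_J
      intro k d _ c Y
      ext x
      simp only [qop_apply, Finset.sum_mul, Finset.mul_sum]
      rw [Finset.sum_comm]
      refine Finset.sum_congr rfl fun j _ => ?_
      rw [Finset.sum_comm]
      refine Finset.sum_congr rfl fun i _ => ?_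
      rw [Finset.sum_eq_single i]
      · rw [hre i i (c i (d j)) (Y i j x), hid i]
      · intro b _ hb
        rw [hre b i (c i (d j)) (Y b j x), horth i b (fun h => hb h.symm), zero_mul]
      · intro h; exact absurd (Finset.mem_univ i) h
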